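/- arXiv:2605.02257 — 2 statements merged into one kernel-verified Lean document; each statement's English description precedes it below -/
import Mathlib

section
/- Let Ω ⊂ ℂ be a simply connected domain, let F, G : Ω → ℂ be holomorphic with F and G nonvanishing on Ω, and fix z₀ ∈ Ω. Define X_min(z) = Re ∫_{z₀}^z ((1 − G²)F, −i(1 + G²)F, 2GF) dw, X₁(z) = Re ∫_{z₀}^z (F, −iF, GF) dw, and X₂(z) = Re ∫_{z₀}^z (FG², −iFG², FG) dw. Then X_min = X₁ + A X₂ on Ω, where A = diag(−1,1,1), and both X₁ and X₂ are harmonic immersions of Ω into ℝ³ (all their coordinate functions are harmonic and their differentials have rank 2 everywhere). -/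
/-- Partial derivative of a real-valued function on `ℂ ≅ ℝ²` in direction `v`. -/
noncomputable def pd (v : ℂ) (f : ℂ → ℝ) (z : ℂ) : ℝ := fderiv ℝ f z v

/-- A real-valued function is harmonic on `Ω` if it is `C²` there and satisfies
Laplace's equation `h_xx + h_yy = 0` (derivatives in directions `1` and `I`). -/
def HarmonicOnSet (f : ℂ → ℝ) (Ω : Set ℂ) : Prop :=
  ContDiffOn ℝ 2 f Ω ∧
    ∀ z ∈ Ω, pd 1 (pd 1 f) z + pd Complex.I (pd Complex.I f) z = 0

/-- The diagonal linear map `A = diag(-1,1,1)` on `ℝ³ ≅ ℝ × ℝ × ℝ`. -/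
def AdiagR : ℝ × ℝ × ℝ → ℝ × ℝ × ℝ := fun v => (-v.1, v.2.1, v.2.2)

/-- The real-linear map `v ↦ (v * c).re`. -/
noncomputable def Lc (c : ℂ) : ℂ →L[ℝ] ℝ :=
  Complex.reCLM.comp (((1 : ℂ →L[ℂ] ℂ).smulRight c).restrictScalars ℝ)

lemma Lc_apply (c v : ℂ) : Lc c v = (v * c).re := by
  simp [Lc, smul_eq_mul]

lemma hasFDerivAt_re {f : ℂ → ℂ} {c z : ℂ} (h : HasDerivAt f c z) :
    HasFDerivAt (fun w => (f w).re) (Lc c) z :=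
  Complex.reCLM.hasFDerivAt.comp z (h.hasFDerivAt.restrictScalars ℝ)

lemma pd_of_hasDerivAt {f : ℂ → ℂ} {c z : ℂ} (h : HasDerivAt f c z) (v : ℂ) :
    pd v (fun w => (f w).re) z = (v * c).re := by
  rw [pd, (hasFDerivAt_re h).fderiv, Lc_apply]

/-- The real part of a twice complex-differentiable function is harmonic. -/
lemma harmonicOnSet_re {Ω : Set ℂ} (hΩ : IsOpen Ω) {f f' f'' : ℂ → ℂ}
    (h1 : ∀ z ∈ Ω, HasDerivAt f (f' z) z) (h2 : ∀ z ∈ Ω, HasDerivAt f' (f'' z) z) :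
    HarmonicOnSet (fun w => (f w).re) Ω := by
  constructor
  · have hdiff : DifferentiableOn ℂ f Ω := fun z hz =>
      (h1 z hz).differentiableAt.differentiableWithinAt
    have han := hdiff.analyticOnNhd hΩ
    have hcd : ContDiffOn ℂ 2 f Ω := han.contDiffOn hΩ.uniqueDiffOn
    exact Complex.reCLM.contDiff.comp_contDiffOn (hcd.restrict_scalars ℝ)
  · intro z hz
    have e1 : pd 1 (fun w => (f w).re) =ᶠ[nhds z] fun w => (f' w).re := by
      filter_upwards [hΩ.mem_nhds hz] with w hw
      rw [pd_of_hasDerivAt (h1 w hw), one_mul]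
    have e2 : pd Complex.I (fun w => (f w).re)
        =ᶠ[nhds z] fun w => ((fun u => Complex.I * f' u) w).re := by
      filter_upwards [hΩ.mem_nhds hz] with w hw
      rw [pd_of_hasDerivAt (h1 w hw)]
    have d2 : HasDerivAt (fun u => Complex.I * f' u) (Complex.I * f'' z) z :=
      (h2 z hz).const_mul Complex.I
    have t1 : pd 1 (pd 1 fun w => (f w).re) z = (f'' z).re := by
      rw [pd, Filter.EventuallyEq.fderiv_eq e1, ← pd,
        pd_of_hasDerivAt (h2 z hz), one_mul]
    have t2 : pd Complex.I (pd Complex.I fun w => (f w).re) z = -(f'' z).re := by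
      rw [pd, Filter.EventuallyEq.fderiv_eq e2, ← pd, pd_of_hasDerivAt d2]
      have : Complex.I * (Complex.I * f'' z) = -(f'' z) := by
        rw [← mul_assoc, Complex.I_mul_I, neg_one_mul]
      rw [this, Complex.neg_re]
    rw [t1, t2, add_neg_cancel]

/-- A holomorphic function with vanishing derivative on an open preconnected set,
vanishing at one point, vanishes identically. -/
lemma eq_zero_of_deriv_zero {Ω : Set ℂ} (hΩ : IsOpen Ω) (hpre : IsPreconnected Ω)
    {h : ℂ → ℂ} (hd : ∀ z ∈ Ω, HasDerivAt h 0 z) {z₀ : ℂ} (hz₀ : z₀ ∈ Ω)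
    (h0 : h z₀ = 0) : ∀ z ∈ Ω, h z = 0 := by
  have hdiff : DifferentiableOn ℂ h Ω := fun z hz =>
    (hd z hz).differentiableAt.differentiableWithinAt
  have han := hdiff.analyticOnNhd hΩ
  obtain ⟨r, hr, hball⟩ := Metric.isOpen_iff.mp hΩ z₀ hz₀
  have hev : h =ᶠ[nhds z₀] fun _ => (0 : ℂ) := by
    filter_upwards [Metric.ball_mem_nhds z₀ hr] with w hw
    have hc : h w = h z₀ := by
      apply (convex_ball z₀ r).is_const_of_fderivWithin_eq_zero
        (hdiff.mono hball) ?_ hw (Metric.mem_ball_self hr)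
      intro x hx
      rw [fderivWithin_of_isOpen Metric.isOpen_ball hx,
        ((hd x (hball hx)).hasFDerivAt).fderiv]
      ext
      simp

    rw [hc, h0]
  exact fun z hz =>
    han.eqOn_of_preconnected_of_eventuallyEq analyticOnNhd_const hpre hz₀ hev hz

/-- Injectivity of the differential of a triple of real parts. -/
lemma injective_triple {f₁ f₂ f₃ : ℂ → ℂ} {c c₃ z : ℂ}
    (h₁ : HasDerivAt f₁ c z) (h₂ : HasDerivAt f₂ (-Complex.I * c) z)
    (h₃ : HasDerivAt f₃ c₃ z) (hc : c ≠ 0) :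
    Function.Injective
      (fderiv ℝ (fun w => (((f₁ w).re, (f₂ w).re, (f₃ w).re) : ℝ × ℝ × ℝ)) z) := by
  have hD : HasFDerivAt (fun w => (((f₁ w).re, (f₂ w).re, (f₃ w).re) : ℝ × ℝ × ℝ))
      ((Lc c).prod ((Lc (-Complex.I * c)).prod (Lc c₃))) z :=
    HasFDerivAt.prodMk (hasFDerivAt_re h₁) (HasFDerivAt.prodMk (hasFDerivAt_re h₂) (hasFDerivAt_re h₃))
  rw [hD.fderiv]
  intro v w hvw
  simp only [ContinuousLinearMap.prod_apply, Prod.mk.injEq, Lc_apply] at hvw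
  have hre : (v * c).re = (w * c).re := hvw.1
  have him : (v * c).im = (w * c).im := by
    have h2 := hvw.2.1
    have e : ∀ u : ℂ, (u * (-Complex.I * c)).re = (u * c).im := by
      intro u
      simp [Complex.mul_re, Complex.mul_im]
      ring
    rw [e v, e w] at h2
    exact h2
  have : v * c = w * c := Complex.ext hre him
  exact mul_right_cancel₀ hc this

/-- A minimal surface decomposes as a superposition of two harmonic immersions:
`X_min = X₁ + A X₂`, where the `Mⱼ, Aⱼ, Bⱼ` are the primitives (vanishing at `z₀`)
of the Weierstrass integrands of `X_min`, `X₁`, `X₂` respectively. -/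
theorem minimal_surface_superposition
    (Ω : Set ℂ) (hΩopen : IsOpen Ω) (hSC : SimplyConnectedSpace Ω)
    (F G : ℂ → ℂ)
    (hF : DifferentiableOn ℂ F Ω) (hG : DifferentiableOn ℂ G Ω)
    (hFne : ∀ z ∈ Ω, F z ≠ 0) (hGne : ∀ z ∈ Ω, G z ≠ 0)
    (z₀ : ℂ) (hz₀ : z₀ ∈ Ω)
    (M₁ M₂ M₃ A₁ A₂ A₃ B₁ B₂ B₃ : ℂ → ℂ)
    (hM₁ : ∀ z ∈ Ω, HasDerivAt M₁ ((1 - G z ^ 2) * F z) z)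
    (hM₂ : ∀ z ∈ Ω, HasDerivAt M₂ (-Complex.I * (1 + G z ^ 2) * F z) z)
    (hM₃ : ∀ z ∈ Ω, HasDerivAt M₃ (2 * G z * F z) z)
    (hA₁ : ∀ z ∈ Ω, HasDerivAt A₁ (F z) z)
    (hA₂ : ∀ z ∈ Ω, HasDerivAt A₂ (-Complex.I * F z) z)
    (hA₃ : ∀ z ∈ Ω, HasDerivAt A₃ (G z * F z) z)
    (hB₁ : ∀ z ∈ Ω, HasDerivAt B₁ (F z * G z ^ 2) z)
    (hB₂ : ∀ z ∈ Ω, HasDerivAt B₂ (-Complex.I * F z * G z ^ 2) z)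
    (hB₃ : ∀ z ∈ Ω, HasDerivAt B₃ (F z * G z) z)
    (hM₁0 : M₁ z₀ = 0) (hM₂0 : M₂ z₀ = 0) (hM₃0 : M₃ z₀ = 0)
    (hA₁0 : A₁ z₀ = 0) (hA₂0 : A₂ z₀ = 0) (hA₃0 : A₃ z₀ = 0)
    (hB₁0 : B₁ z₀ = 0) (hB₂0 : B₂ z₀ = 0) (hB₃0 : B₃ z₀ = 0) :
    (∀ z ∈ Ω,
      (((M₁ z).re, (M₂ z).re, (M₃ z).re) : ℝ × ℝ × ℝ)
        = (((A₁ z).re, (A₂ z).re, (A₃ z).re) : ℝ × ℝ × ℝ)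
          + AdiagR ((B₁ z).re, (B₂ z).re, (B₃ z).re))
    ∧ HarmonicOnSet (fun z => (A₁ z).re) Ω
    ∧ HarmonicOnSet (fun z => (A₂ z).re) Ω
    ∧ HarmonicOnSet (fun z => (A₃ z).re) Ω
    ∧ HarmonicOnSet (fun z => (B₁ z).re) Ω
    ∧ HarmonicOnSet (fun z => (B₂ z).re) Ω
    ∧ HarmonicOnSet (fun z => (B₃ z).re) Ω
    ∧ (∀ z ∈ Ω, Function.Injective
        (fderiv ℝ (fun w => (((A₁ w).re, (A₂ w).re, (A₃ w).re) : ℝ × ℝ × ℝ)) z))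
    ∧ (∀ z ∈ Ω, Function.Injective
        (fderiv ℝ (fun w => (((B₁ w).re, (B₂ w).re, (B₃ w).re) : ℝ × ℝ × ℝ)) z)) := by
  -- preconnectedness
  have hpre : IsPreconnected Ω := by
    have : PathConnectedSpace Ω := inferInstance
    have : ConnectedSpace Ω := PathConnectedSpace.connectedSpace
    exact (isConnected_iff_connectedSpace.mpr this).isPreconnected
  -- pointwise derivatives of F and G
  have hF' : ∀ z ∈ Ω, HasDerivAt F (deriv F z) z := fun z hz =>
    (hF.differentiableAt (hΩopen.mem_nhds hz)).hasDerivAt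
  have hG' : ∀ z ∈ Ω, HasDerivAt G (deriv G z) z := fun z hz =>
    (hG.differentiableAt (hΩopen.mem_nhds hz)).hasDerivAt
  refine ⟨?_, ?_, ?_, ?_, ?_, ?_, ?_, ?_, ?_⟩
  · -- the decomposition
    have e₁ : ∀ z ∈ Ω, M₁ z - (A₁ z - B₁ z) = 0 := by
      apply eq_zero_of_deriv_zero hΩopen hpre (fun z hz => ?_) hz₀
        (by rw [hM₁0, hA₁0, hB₁0]; ring)
      have h := (hM₁ z hz).sub ((hA₁ z hz).sub (hB₁ z hz))
      convert h using 1
      case e'_9 => ring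
      all_goals rfl
    have e₂ : ∀ z ∈ Ω, M₂ z - (A₂ z + B₂ z) = 0 := by
      apply eq_zero_of_deriv_zero hΩopen hpre (fun z hz => ?_) hz₀
        (by rw [hM₂0, hA₂0, hB₂0]; ring)
      have h := (hM₂ z hz).sub ((hA₂ z hz).add (hB₂ z hz))
      convert h using 1
      case e'_9 => ring
      all_goals rfl
    have e₃ : ∀ z ∈ Ω, M₃ z - (A₃ z + B₃ z) = 0 := by
      apply eq_zero_of_deriv_zero hΩopen hpre (fun z hz => ?_) hz₀
        (by rw [hM₃0, hA₃0, hB₃0]; ring)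
      have h := (hM₃ z hz).sub ((hA₃ z hz).add (hB₃ z hz))
      convert h using 1
      case e'_9 => ring
      all_goals rfl
    intro z hz
    have q₁ : M₁ z = A₁ z - B₁ z := by have := e₁ z hz; linear_combination this
    have q₂ : M₂ z = A₂ z + B₂ z := by have := e₂ z hz; linear_combination this
    have q₃ : M₃ z = A₃ z + B₃ z := by have := e₃ z hz; linear_combination this
    rw [q₁, q₂, q₃]
    simp [AdiagR, Prod.ext_iff, Complex.sub_re, Complex.add_re, sub_eq_add_neg]
  · exact harmonicOnSet_re hΩopen hA₁ hF'
  · exact harmonicOnSet_re hΩopen hA₂ (fun z hz => (hF' z hz).const_mul (-Complex.I))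
  · exact harmonicOnSet_re hΩopen hA₃ (fun z hz => (hG' z hz).mul (hF' z hz))
  · exact harmonicOnSet_re hΩopen hB₁ (fun z hz => (hF' z hz).mul ((hG' z hz).pow 2))
  · exact harmonicOnSet_re hΩopen hB₂
      (fun z hz => ((hF' z hz).const_mul (-Complex.I)).mul ((hG' z hz).pow 2))
  · exact harmonicOnSet_re hΩopen hB₃ (fun z hz => (hF' z hz).mul (hG' z hz))
  · intro z hz
    exact injective_triple (hA₁ z hz) (hA₂ z hz) (hA₃ z hz) (hFne z hz)
  · intro z hz
    have h₂ : HasDerivAt B₂ (-Complex.I * (F z * G z ^ 2)) z := by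
      have := hB₂ z hz
      rwa [mul_assoc] at this
    exact injective_triple (hB₁ z hz) h₂ (hB₃ z hz)
      (mul_ne_zero (hFne z hz) (pow_ne_zero 2 (hGne z hz)))
end

section
/- Let Ω ⊂ ℂ be a simply connected domain, let F, G : Ω → ℂ be holomorphic with F and G nonvanishing on Ω, and fix z₀ ∈ Ω. Define X_max(z) = Re ∫_{z₀}^z ((1 + G²)F, i(1 − G²)F, −2GF) dw (the Weierstrass-type representation of a maximal surface in Lorentz–Minkowski space 𝕃³, regarded as a map into ℝ³), X₁(z) = Re ∫_{z₀}^z (F, iF, −GF) dw, and X₂(z) = Re ∫_{z₀}^z (FG², iFG², −FG) dw. Then X_max = X₁ + B X₂ on Ω, where B = diag(1, −1, 1), and both X₁ and X₂ are harmonic immersions of Ω into ℝ³. -/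
/-- The diagonal linear map `B = diag(1,-1,1)` on `ℝ³ ≅ ℝ × ℝ × ℝ`. -/
def BdiagR : ℝ × ℝ × ℝ → ℝ × ℝ × ℝ := fun v => (v.1, -v.2.1, v.2.2)

/- ### Auxiliary lemmas -/

/-- The real Fréchet derivative of `Re ∘ g` in terms of the complex derivative of `g`. -/
lemma hasFDerivAt_re_of_hasDerivAt {g : ℂ → ℂ} {c z : ℂ} (h : HasDerivAt g c z) :
    HasFDerivAt (fun w => (g w).re)
      (Complex.reCLM.comp (((1 : ℂ →L[ℂ] ℂ).smulRight c).restrictScalars ℝ)) z :=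
  Complex.reCLM.hasFDerivAt.comp z (h.hasFDerivAt.restrictScalars ℝ)

lemma fderiv_re_apply {g : ℂ → ℂ} {c z : ℂ} (h : HasDerivAt g c z) (v : ℂ) :
    fderiv ℝ (fun w => (g w).re) z v = (c * v).re := by
  rw [(hasFDerivAt_re_of_hasDerivAt h).fderiv]
  simp [mul_comm]

/-- A function with zero derivative on an open preconnected set is constant there. -/
lemma eq_at_of_hasDerivAt_zero {Ω : Set ℂ} (hΩ : IsOpen Ω) (hpre : IsPreconnected Ω)
    {f : ℂ → ℂ} (hf : ∀ z ∈ Ω, HasDerivAt f 0 z) {z₀ : ℂ} (hz₀ : z₀ ∈ Ω) :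
    ∀ z ∈ Ω, f z = f z₀ := by
  have loc : ∀ z ∈ Ω, ∀ᶠ w in nhds z, f w = f z := by
    intro z hz
    obtain ⟨ε, hε, hb⟩ := Metric.isOpen_iff.1 hΩ z hz
    refine Filter.eventually_of_mem (Metric.ball_mem_nhds z hε) fun w hw => ?_
    refine (convex_ball z ε).is_const_of_fderivWithin_eq_zero (𝕜 := ℝ)
      (fun x hx => (((hf x (hb hx)).hasFDerivAt.restrictScalars ℝ).differentiableAt).differentiableWithinAt)
      (fun x hx => ?_) hw (Metric.mem_ball_self hε)
    rw [fderivWithin_of_isOpen Metric.isOpen_ball hx,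
      ((hf x (hb hx)).hasFDerivAt.restrictScalars ℝ).fderiv]
    ext v <;> simp
  set u := {z | z ∈ Ω ∧ f z = f z₀} with hu_def
  set v := {z | z ∈ Ω ∧ f z ≠ f z₀} with hv_def
  have hu : IsOpen u := by
    rw [isOpen_iff_mem_nhds]
    rintro z ⟨hz, hfz⟩
    filter_upwards [loc z hz, hΩ.mem_nhds hz] with w h1 h2
    exact ⟨h2, h1.trans hfz⟩
  have hv : IsOpen v := by
    rw [isOpen_iff_mem_nhds]
    rintro z ⟨hz, hfz⟩
    filter_upwards [loc z hz, hΩ.mem_nhds hz] with w h1 h2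
    exact ⟨h2, h1 ▸ hfz⟩
  have hsub : Ω ⊆ u :=
    hpre.subset_left_of_subset_union hu hv
      (by
        rw [Set.disjoint_left]
        rintro a ⟨_, h⟩ ⟨_, h'⟩
        exact h' h)
      (fun z hz => by
        by_cases h : f z = f z₀
        · exact Or.inl ⟨hz, h⟩
        · exact Or.inr ⟨hz, h⟩)
      ⟨z₀, hz₀, hz₀, rfl⟩
  exact fun z hz => (hsub hz).2

/-- The real part of a holomorphic function is harmonic. -/
lemma harmonicOnSet_re_of_holo {Ω : Set ℂ} (hΩ : IsOpen Ω) {h : ℂ → ℂ}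
    (hh : DifferentiableOn ℂ h Ω) : HarmonicOnSet (fun z => (h z).re) Ω := by
  have han : AnalyticOnNhd ℂ h Ω := hh.analyticOnNhd hΩ
  have hdz : ∀ w ∈ Ω, DifferentiableAt ℂ h w := fun w hw => (han w hw).differentiableAt
  have hgz : ∀ w ∈ Ω, DifferentiableAt ℂ (deriv h) w := fun w hw =>
    ((han.deriv) w hw).differentiableAt
  constructor
  · have h2 : ContDiffOn ℝ 2 h Ω := (hh.contDiffOn (n := 2) hΩ).restrict_scalars ℝ
    exact Complex.reCLM.contDiff.comp_contDiffOn h2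
  · intro z hz
    have e1 : (fun w => (fderiv ℝ (fun z => (h z).re) w) 1)
        =ᶠ[nhds z] fun w => (deriv h w).re := by
      filter_upwards [hΩ.mem_nhds hz] with w hw
      simpa using fderiv_re_apply (hdz w hw).hasDerivAt 1
    have e2 : (fun w => (fderiv ℝ (fun z => (h z).re) w) Complex.I)
        =ᶠ[nhds z] fun w => (deriv h w * Complex.I).re := by
      filter_upwards [hΩ.mem_nhds hz] with w hw
      exact fderiv_re_apply (hdz w hw).hasDerivAt Complex.I
    have d1 : pd 1 (pd 1 fun z => (h z).re) z = (deriv (deriv h) z).re := by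
      have hpd : pd 1 (fun z => (h z).re) = fun w => (fderiv ℝ (fun z => (h z).re) w) 1 := rfl
      show fderiv ℝ (pd 1 fun z => (h z).re) z 1 = _
      rw [hpd, e1.fderiv_eq]
      simpa using fderiv_re_apply (hgz z hz).hasDerivAt 1
    have d2 : pd Complex.I (pd Complex.I fun z => (h z).re) z
        = (deriv (deriv h) z * Complex.I * Complex.I).re := by
      have hpd : pd Complex.I (fun z => (h z).re)
          = fun w => (fderiv ℝ (fun z => (h z).re) w) Complex.I := rfl
      show fderiv ℝ (pd Complex.I fun z => (h z).re) z Complex.I = _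
      rw [hpd, e2.fderiv_eq]
      exact fderiv_re_apply ((hgz z hz).hasDerivAt.mul_const Complex.I) Complex.I
    rw [d1, d2]
    have : deriv (deriv h) z * Complex.I * Complex.I = -(deriv (deriv h) z) := by
      rw [mul_assoc, Complex.I_mul_I, mul_neg_one]
    rw [this, Complex.neg_re]
    ring

/-- Injectivity of the real differential of a triple of real parts, when the first
two complex derivatives are `c` and `I * c` with `c ≠ 0`. -/
lemma injective_fderiv_triple {f₁ f₂ f₃ : ℂ → ℂ} {c c₃ z : ℂ} (hc : c ≠ 0)
    (h₁ : HasDerivAt f₁ c z) (h₂ : HasDerivAt f₂ (Complex.I * c) z) (h₃ : HasDerivAt f₃ c₃ z) :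
    Function.Injective
      (fderiv ℝ (fun w => (((f₁ w).re, (f₂ w).re, (f₃ w).re) : ℝ × ℝ × ℝ)) z) := by
  have hfd := (HasFDerivAt.prodMk (hasFDerivAt_re_of_hasDerivAt h₁)
    (HasFDerivAt.prodMk (hasFDerivAt_re_of_hasDerivAt h₂) (hasFDerivAt_re_of_hasDerivAt h₃)))
  intro a b hab
  rw [hfd.fderiv] at hab
  simp only [ContinuousLinearMap.prod_apply, ContinuousLinearMap.coe_comp',
    ContinuousLinearMap.coe_restrictScalars', Function.comp_apply,
    ContinuousLinearMap.smulRight_apply, ContinuousLinearMap.one_apply, smul_eq_mul,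
    Complex.reCLM_apply, Prod.mk.injEq] at hab
  obtain ⟨e1, e2, _⟩ := hab
  have hmul : c * a = c * b := by
    apply Complex.ext
    · rw [mul_comm c a, mul_comm c b]; exact e1
    · have : ∀ w : ℂ, (w * (Complex.I * c)).re = -(c * w).im := by
        intro w; simp [Complex.mul_re, Complex.mul_im]; ring
      have := e2
      rw [show a * (Complex.I * c) = Complex.I * (c * a) by ring,
        show b * (Complex.I * c) = Complex.I * (c * b) by ring] at this
      simpa [Complex.I_mul_re] using neg_injective (by simpa [Complex.I_mul_re] using this)
  exact mul_left_cancel₀ hc hmul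

/-- A maximal surface in Lorentz–Minkowski space decomposes as a superposition of
two harmonic immersions: `X_max = X₁ + B X₂`, where the `Mⱼ, Aⱼ, Bⱼ` are the
primitives (vanishing at `z₀`) of the Weierstrass-type integrands of `X_max`,
`X₁`, `X₂` respectively. -/
theorem maximal_surface_superposition
    (Ω : Set ℂ) (hΩopen : IsOpen Ω) (hSC : SimplyConnectedSpace Ω)
    (F G : ℂ → ℂ)
    (hF : DifferentiableOn ℂ F Ω) (hG : DifferentiableOn ℂ G Ω)
    (hFne : ∀ z ∈ Ω, F z ≠ 0) (hGne : ∀ z ∈ Ω, G z ≠ 0)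
    (z₀ : ℂ) (hz₀ : z₀ ∈ Ω)
    (M₁ M₂ M₃ A₁ A₂ A₃ B₁ B₂ B₃ : ℂ → ℂ)
    (hM₁ : ∀ z ∈ Ω, HasDerivAt M₁ ((1 + G z ^ 2) * F z) z)
    (hM₂ : ∀ z ∈ Ω, HasDerivAt M₂ (Complex.I * (1 - G z ^ 2) * F z) z)
    (hM₃ : ∀ z ∈ Ω, HasDerivAt M₃ (-2 * G z * F z) z)
    (hA₁ : ∀ z ∈ Ω, HasDerivAt A₁ (F z) z)
    (hA₂ : ∀ z ∈ Ω, HasDerivAt A₂ (Complex.I * F z) z)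
    (hA₃ : ∀ z ∈ Ω, HasDerivAt A₃ (-(G z * F z)) z)
    (hB₁ : ∀ z ∈ Ω, HasDerivAt B₁ (F z * G z ^ 2) z)
    (hB₂ : ∀ z ∈ Ω, HasDerivAt B₂ (Complex.I * F z * G z ^ 2) z)
    (hB₃ : ∀ z ∈ Ω, HasDerivAt B₃ (-(F z * G z)) z)
    (hM₁0 : M₁ z₀ = 0) (hM₂0 : M₂ z₀ = 0) (hM₃0 : M₃ z₀ = 0)
    (hA₁0 : A₁ z₀ = 0) (hA₂0 : A₂ z₀ = 0) (hA₃0 : A₃ z₀ = 0)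
    (hB₁0 : B₁ z₀ = 0) (hB₂0 : B₂ z₀ = 0) (hB₃0 : B₃ z₀ = 0) :
    (∀ z ∈ Ω,
      (((M₁ z).re, (M₂ z).re, (M₃ z).re) : ℝ × ℝ × ℝ)
        = (((A₁ z).re, (A₂ z).re, (A₃ z).re) : ℝ × ℝ × ℝ)
          + BdiagR ((B₁ z).re, (B₂ z).re, (B₃ z).re))
    ∧ HarmonicOnSet (fun z => (A₁ z).re) Ω
    ∧ HarmonicOnSet (fun z => (A₂ z).re) Ω
    ∧ HarmonicOnSet (fun z => (A₃ z).re) Ω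
    ∧ HarmonicOnSet (fun z => (B₁ z).re) Ω
    ∧ HarmonicOnSet (fun z => (B₂ z).re) Ω
    ∧ HarmonicOnSet (fun z => (B₃ z).re) Ω
    ∧ (∀ z ∈ Ω, Function.Injective
        (fderiv ℝ (fun w => (((A₁ w).re, (A₂ w).re, (A₃ w).re) : ℝ × ℝ × ℝ)) z))
    ∧ (∀ z ∈ Ω, Function.Injective
        (fderiv ℝ (fun w => (((B₁ w).re, (B₂ w).re, (B₃ w).re) : ℝ × ℝ × ℝ)) z)) := by
  -- Preconnectedness of Ω
  have hpre : IsPreconnected Ω := by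
    rw [isPreconnected_iff_preconnectedSpace]
    infer_instance
  -- Differentiability of primitives
  have dA₁ : DifferentiableOn ℂ A₁ Ω := fun z hz => (hA₁ z hz).differentiableAt.differentiableWithinAt
  have dA₂ : DifferentiableOn ℂ A₂ Ω := fun z hz => (hA₂ z hz).differentiableAt.differentiableWithinAt
  have dA₃ : DifferentiableOn ℂ A₃ Ω := fun z hz => (hA₃ z hz).differentiableAt.differentiableWithinAt
  have dB₁ : DifferentiableOn ℂ B₁ Ω := fun z hz => (hB₁ z hz).differentiableAt.differentiableWithinAt
  have dB₂ : DifferentiableOn ℂ B₂ Ω := fun z hz => (hB₂ z hz).differentiableAt.differentiableWithinAt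
  have dB₃ : DifferentiableOn ℂ B₃ Ω := fun z hz => (hB₃ z hz).differentiableAt.differentiableWithinAt
  refine ⟨?_, harmonicOnSet_re_of_holo hΩopen dA₁, harmonicOnSet_re_of_holo hΩopen dA₂,
    harmonicOnSet_re_of_holo hΩopen dA₃, harmonicOnSet_re_of_holo hΩopen dB₁,
    harmonicOnSet_re_of_holo hΩopen dB₂, harmonicOnSet_re_of_holo hΩopen dB₃, ?_, ?_⟩
  · -- the identity X_max = X₁ + B X₂
    intro z hz
    have e1 : M₁ z = A₁ z + B₁ z := by
      have key : ∀ w ∈ Ω, (fun w => M₁ w - (A₁ w + B₁ w)) w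
          = (fun w => M₁ w - (A₁ w + B₁ w)) z₀ := by
        refine eq_at_of_hasDerivAt_zero hΩopen hpre (fun w hw => ?_) hz₀
        have := (hM₁ w hw).sub ((hA₁ w hw).add (hB₁ w hw))
        refine this.congr_deriv ?_
        ring
      have := key z hz
      simp only [hM₁0, hA₁0, hB₁0] at this
      have h0 : M₁ z - (A₁ z + B₁ z) = 0 := by rw [this]; ring
      linear_combination h0
    have e2 : M₂ z = A₂ z - B₂ z := by
      have key : ∀ w ∈ Ω, (fun w => M₂ w - (A₂ w - B₂ w)) w
          = (fun w => M₂ w - (A₂ w - B₂ w)) z₀ := by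
        refine eq_at_of_hasDerivAt_zero hΩopen hpre (fun w hw => ?_) hz₀
        have := (hM₂ w hw).sub ((hA₂ w hw).sub (hB₂ w hw))
        refine this.congr_deriv ?_
        ring
      have := key z hz
      simp only [hM₂0, hA₂0, hB₂0] at this
      have h0 : M₂ z - (A₂ z - B₂ z) = 0 := by rw [this]; ring
      linear_combination h0
    have e3 : M₃ z = A₃ z + B₃ z := by
      have key : ∀ w ∈ Ω, (fun w => M₃ w - (A₃ w + B₃ w)) w
          = (fun w => M₃ w - (A₃ w + B₃ w)) z₀ := by
        refine eq_at_of_hasDerivAt_zero hΩopen hpre (fun w hw => ?_) hz₀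
        have := (hM₃ w hw).sub ((hA₃ w hw).add (hB₃ w hw))
        refine this.congr_deriv ?_
        ring
      have := key z hz
      simp only [hM₃0, hA₃0, hB₃0] at this
      have h0 : M₃ z - (A₃ z + B₃ z) = 0 := by rw [this]; ring
      linear_combination h0
    have r1 : (M₁ z).re = (A₁ z).re + (B₁ z).re := by rw [e1, Complex.add_re]
    have r2 : (M₂ z).re = (A₂ z).re + -(B₂ z).re := by rw [e2, Complex.sub_re]; ring
    have r3 : (M₃ z).re = (A₃ z).re + (B₃ z).re := by rw [e3, Complex.add_re]
    simp [BdiagR, Prod.ext_iff, r1, r2, r3]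
  · -- X₁ is an immersion
    intro z hz
    exact injective_fderiv_triple (hFne z hz) (hA₁ z hz) (hA₂ z hz) (hA₃ z hz)
  · -- X₂ is an immersion
    intro z hz
    have hne : F z * G z ^ 2 ≠ 0 :=
      mul_ne_zero (hFne z hz) (pow_ne_zero 2 (hGne z hz))
    refine injective_fderiv_triple hne (hB₁ z hz) ?_ (hB₃ z hz)
    have := hB₂ z hz
    convert this using 1
    ring
end
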